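/- Assume I(Y;Ỹ) > 0. Then there exists a constant E₊ > 0 such that for every integer t ≥ 1, if ((Y_i,Ȳ_i))_{i=1}^t are i.i.d. with law P_Y ⊗ P_Y (i.e., Y_i and Ȳ_i independent, each distributed P_Y), then P[ ∏_{i=1}^t λ(Y_i,Ȳ_i) > 1 ] ≤ exp(−t·E₊). -/

import Mathlib

open Filter Real

section

variable {𝒴 : Type*} [Fintype 𝒴] [Nonempty 𝒴]

/-- `p` is a probability mass function on a finite alphabet. -/
def IsPmf {α : Type*} [Fintype α] (p : α → ℝ) : Prop := (∀ a, 0 ≤ p a) ∧ ∑ a, p a = 1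

/-- The first marginal of a pmf on `𝒴 × 𝒴`. -/
noncomputable def margFst (p : 𝒴 × 𝒴 → ℝ) (y : 𝒴) : ℝ := ∑ z, p (y, z)

/-- The two marginals of `p` agree. -/
def MargEq (p : 𝒴 × 𝒴 → ℝ) : Prop := ∀ y, ∑ z, p (y, z) = ∑ z, p (z, y)

/-- The likelihood ratio `λ(y, ỹ)`. -/
noncomputable def lam2 (p : 𝒴 × 𝒴 → ℝ) (y z : 𝒴) : ℝ :=
  if 0 < margFst p y * margFst p z then p (y, z) / (margFst p y * margFst p z) else 0

/-- The mutual information `I(Y; Ỹ)`. -/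
noncomputable def mutInf2 (p : 𝒴 × 𝒴 → ℝ) : ℝ :=
  ∑ z : 𝒴 × 𝒴, if 0 < p z then p z * Real.log (lam2 p z.1 z.2) else 0

/-- Exponential bound for the probability that the product of likelihood
ratios of `t` i.i.d. pairs with law `P_Y ⊗ P_Y` exceeds `1`. -/
theorem exponent_for_positive_llr_under_independence
    (p : 𝒴 × 𝒴 → ℝ) (hp : IsPmf p) (hm : MargEq p)
    (hI : 0 < mutInf2 p) :
    ∃ Eplus > (0 : ℝ), ∀ t : ℕ, 1 ≤ t →
      (∑ z : Fin t → 𝒴 × 𝒴, (∏ i, margFst p (z i).1 * margFst p (z i).2) *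
          (if 1 < (∏ i, lam2 p (z i).1 (z i).2) then 1 else 0)) ≤
        Real.exp (-(t : ℝ) * Eplus) := by
  obtain ⟨hpos, hsum⟩ := hp
  have hq0 : ∀ y, 0 ≤ margFst p y := fun y => Finset.sum_nonneg fun z _ => hpos _
  have hqsum : ∑ y, margFst p y = 1 := by
    rw [← hsum, Fintype.sum_prod_type]; rfl
  have hple1 : ∀ y z, p (y, z) ≤ margFst p y := fun y z =>
    Finset.single_le_sum (fun w _ => hpos _) (Finset.mem_univ z)
  have hple2 : ∀ y z, p (y, z) ≤ margFst p z := by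
    intro y z
    calc p (y, z) ≤ ∑ w, p (w, z) :=
          Finset.single_le_sum (f := fun w => p (w, z)) (fun w _ => hpos _) (Finset.mem_univ y)
      _ = margFst p z := (hm z).symm
  have hlamnn : ∀ y z, 0 ≤ lam2 p y z := by
    intro y z
    unfold lam2
    split_ifs with h
    · exact div_nonneg (hpos _) h.le
    · exact le_rfl
  -- the Bhattacharyya coefficient
  set ρ : ℝ := ∑ w : 𝒴 × 𝒴, margFst p w.1 * margFst p w.2 * Real.sqrt (lam2 p w.1 w.2)
    with hρdef
  have htermnn : ∀ w : 𝒴 × 𝒴, 0 ≤ margFst p w.1 * margFst p w.2 * Real.sqrt (lam2 p w.1 w.2) :=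
    fun w => mul_nonneg (mul_nonneg (hq0 _) (hq0 _)) (Real.sqrt_nonneg _)
  -- each term equals sqrt(p * qq)
  have hterm_eq : ∀ w : 𝒴 × 𝒴, margFst p w.1 * margFst p w.2 * Real.sqrt (lam2 p w.1 w.2)
      = Real.sqrt (p w * (margFst p w.1 * margFst p w.2)) := by
    intro w
    unfold lam2
    split_ifs with h
    · have hpe : p (w.1, w.2) = p w := rfl
      set a : ℝ := margFst p w.1 * margFst p w.2 with hadef
      calc a * Real.sqrt (p (w.1, w.2) / a)
          = Real.sqrt (a ^ 2) * Real.sqrt (p w / a) := by rw [Real.sqrt_sq h.le, hpe]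
        _ = Real.sqrt (a ^ 2 * (p w / a)) := (Real.sqrt_mul (sq_nonneg a) _).symm
        _ = Real.sqrt (p w * a) := by
            rw [show a ^ 2 * (p w / a) = p w * a from by field_simp [h.ne']]
    · -- qq = 0, hence p w = 0
      have hq : margFst p w.1 * margFst p w.2 = 0 := by
        rcases (mul_nonneg (hq0 w.1) (hq0 w.2)).lt_or_eq with h' | h'
        · exact absurd h' h
        · exact h'.symm
      simp [hq]
  -- a witness where p differs from the product of marginals
  have hwit : ∃ w : 𝒴 × 𝒴, p w ≠ margFst p w.1 * margFst p w.2 := by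
    by_contra hcon
    push_neg at hcon
    have hz : mutInf2 p = 0 := by
      unfold mutInf2
      refine Finset.sum_eq_zero fun w _ => ?_
      split_ifs with hw
      · have hqq : 0 < margFst p w.1 * margFst p w.2 := by rw [← hcon w]; exact hw
        have hl : lam2 p w.1 w.2 = 1 := by
          unfold lam2
          rw [if_pos hqq, show p (w.1, w.2) = margFst p w.1 * margFst p w.2 from hcon w]
          exact div_self hqq.ne'
        rw [hl, Real.log_one, mul_zero]
      · rfl
    rw [hz] at hI; exact lt_irrefl 0 hI
  -- sum of (p + qq)/2 equals 1
  have hsum2 : ∑ w : 𝒴 × 𝒴, (p w + margFst p w.1 * margFst p w.2) / 2 = 1 := by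
    rw [← Finset.sum_div, Finset.sum_add_distrib, hsum]
    have hqq1 : ∑ w : 𝒴 × 𝒴, margFst p w.1 * margFst p w.2 = 1 := by
      rw [Fintype.sum_prod_type]
      simp_rw [← Finset.mul_sum, hqsum, mul_one, hqsum]
    rw [hqq1]; norm_num
  -- ρ < 1
  have hρlt : ρ < 1 := by
    have hlt : ρ < ∑ w : 𝒴 × 𝒴, (p w + margFst p w.1 * margFst p w.2) / 2 := by
      rw [hρdef]
      refine Finset.sum_lt_sum (fun w _ => ?_) ?_
      · rw [hterm_eq w, Real.sqrt_mul (hpos w)]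
        nlinarith [sq_nonneg (Real.sqrt (p w) - Real.sqrt (margFst p w.1 * margFst p w.2)),
          Real.sq_sqrt (hpos w), Real.sq_sqrt (mul_nonneg (hq0 w.1) (hq0 w.2)),
          Real.sqrt_nonneg (p w), Real.sqrt_nonneg (margFst p w.1 * margFst p w.2)]
      · obtain ⟨w, hw⟩ := hwit
        refine ⟨w, Finset.mem_univ w, ?_⟩
        rw [hterm_eq w, Real.sqrt_mul (hpos w)]
        have hne : Real.sqrt (p w) ≠ Real.sqrt (margFst p w.1 * margFst p w.2) := by
          intro heq
          exact hw ((Real.sqrt_inj (hpos w) (mul_nonneg (hq0 w.1) (hq0 w.2))).mp heq)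
        have hsq : 0 < (Real.sqrt (p w) - Real.sqrt (margFst p w.1 * margFst p w.2)) ^ 2 :=
          sq_pos_of_ne_zero (sub_ne_zero.mpr hne)
        nlinarith [Real.sq_sqrt (hpos w), Real.sq_sqrt (mul_nonneg (hq0 w.1) (hq0 w.2)),
          Real.sqrt_nonneg (p w), Real.sqrt_nonneg (margFst p w.1 * margFst p w.2)]
    linarith [hsum2 ▸ hlt]
  -- ρ > 0
  have hρpos : 0 < ρ := by
    obtain ⟨w, hw⟩ : ∃ w : 𝒴 × 𝒴, 0 < p w := by
      by_contra h
      push_neg at h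
      have : ∑ w : 𝒴 × 𝒴, p w ≤ 0 := Finset.sum_nonpos fun w _ => h w
      linarith
    refine Finset.sum_pos' (fun w _ => htermnn w) ⟨w, Finset.mem_univ w, ?_⟩
    rw [hterm_eq w]
    have h1 : 0 < margFst p w.1 := lt_of_lt_of_le hw (hple1 w.1 w.2)
    have h2 : 0 < margFst p w.2 := lt_of_lt_of_le hw (hple2 w.1 w.2)
    exact Real.sqrt_pos.mpr (by positivity)
  refine ⟨-Real.log ρ, neg_pos.mpr (Real.log_neg hρpos hρlt), ?_⟩
  intro t ht
  have key : (∑ z : Fin t → 𝒴 × 𝒴, (∏ i, margFst p (z i).1 * margFst p (z i).2) *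
      (if 1 < (∏ i, lam2 p (z i).1 (z i).2) then 1 else 0)) ≤ ρ ^ t := by
    rw [hρdef, Fintype.sum_pow]
    refine Finset.sum_le_sum fun z _ => ?_
    split_ifs with h
    · rw [mul_one]
      have hsnn : 0 ≤ ∏ i, Real.sqrt (lam2 p (z i).1 (z i).2) :=
        Finset.prod_nonneg fun i _ => Real.sqrt_nonneg _
      have hs2 : (∏ i, Real.sqrt (lam2 p (z i).1 (z i).2)) ^ 2
          = ∏ i, lam2 p (z i).1 (z i).2 := by
        rw [← Finset.prod_pow]
        exact Finset.prod_congr rfl fun i _ => Real.sq_sqrt (hlamnn _ _)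
      have hs1 : 1 ≤ ∏ i, Real.sqrt (lam2 p (z i).1 (z i).2) := by
        nlinarith [hsnn, hs2, h]
      calc (∏ i, margFst p (z i).1 * margFst p (z i).2)
          ≤ (∏ i, margFst p (z i).1 * margFst p (z i).2) *
            ∏ i, Real.sqrt (lam2 p (z i).1 (z i).2) :=
            le_mul_of_one_le_right
              (Finset.prod_nonneg fun i _ => mul_nonneg (hq0 _) (hq0 _)) hs1
        _ = ∏ i, margFst p (z i).1 * margFst p (z i).2 * Real.sqrt (lam2 p (z i).1 (z i).2) :=
            (Finset.prod_mul_distrib).symm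
    · rw [mul_zero]
      exact Finset.prod_nonneg fun i _ => htermnn _
  calc _ ≤ ρ ^ t := key
    _ = Real.exp (-(t : ℝ) * -Real.log ρ) := by
        rw [neg_mul_neg, Real.exp_nat_mul, Real.exp_log hρpos]

end
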